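/- Let X ∈ ℝ^p, Y ∈ ℝ^q, Z ∈ ℝ^r be random vectors on a common probability space with finite first moments, and let (X,Y,Z), (X',Y',Z') be iid copies. Define the double-centered distance functions A_X(x,x') := |x−x'| − E|x−X'| − E|X−x'| + E|X−X'|, and similarly B_Y, C_Z. Assume A_X(X,X')², B_Y(Y,Y')², C_Z(Z,Z')² are integrable, and define V²(X,Y) := E[A_X(X,X') B_Y(Y,Y')] and analogously all other pairs, with V²(X,X) := E[A_X(X,X')²], etc. Define the population distance correlation R²(X,Y) := V²(X,Y)/√(V²(X,X)V²(Y,Y)) when V²(X,X)V²(Y,Y) > 0 and R²(X,Y) := 0 otherwise; similarly R²(X,Z), R²(Y,Z); write R⁴ := (R²)². Set α := V²(X,Z)/V²(Z,Z) and β := V²(Y,Z)/V²(Z,Z) if V²(Z,Z) > 0, and α = β = 0 otherwise. Define the population partial distance correlation R*(X,Y;Z) := E[(A_X(X,X') − αC_Z(Z,Z'))(B_Y(Y,Y') − βC_Z(Z,Z'))] / (|P_{Z⊥}(X)| |P_{Z⊥}(Y)|), where |P_{Z⊥}(X)|² := E[(A_X(X,X') − αC_Z(Z,Z'))²] and |P_{Z⊥}(Y)|²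 := E[(B_Y(Y,Y') − βC_Z(Z,Z'))²], with R*(X,Y;Z) := 0 if |P_{Z⊥}(X)||P_{Z⊥}(Y)| = 0. Then R*(X,Y;Z) = (R²(X,Y) − R²(X,Z)R²(Y,Z)) / (√(1−R⁴(X,Z)) √(1−R⁴(Y,Z))) whenever R²(X,Z) ≠ 1 and R²(Y,Z) ≠ 1, and R*(X,Y;Z) = 0 whenever R²(X,Z) = 1 or R²(Y,Z) = 1. -/

import Mathlib

open MeasureTheory ProbabilityTheory

/-- The double-centered distance function
`A_X(x,x') = |x−x'| − E|x−X'| − E|X−x'| + E|X−X'|` with respect to the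
distribution of a random vector `X` (the expectations taken over independent
copies, which have the same distribution as `X`). -/
noncomputable def dcf {Ω : Type*} [MeasurableSpace Ω] (μ : Measure Ω) {d : ℕ}
    (X : Ω → EuclideanSpace ℝ (Fin d)) (x x' : EuclideanSpace ℝ (Fin d)) : ℝ :=
  ‖x - x'‖ - (∫ ω, ‖x - X ω‖ ∂μ) - (∫ ω, ‖X ω - x'‖ ∂μ)
    + ∫ ω, ∫ ω', ‖X ω - X ω'‖ ∂μ ∂μ

/-- `V²(X,Y) = E[A_X(X,X') B_Y(Y,Y')]`, where `(X',Y')` is an iid copy of `(X,Y)`. -/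
noncomputable def Vsq {Ω : Type*} [MeasurableSpace Ω] (μ : Measure Ω) {d e : ℕ}
    (X X' : Ω → EuclideanSpace ℝ (Fin d))
    (Y Y' : Ω → EuclideanSpace ℝ (Fin e)) : ℝ :=
  ∫ ω, dcf μ X (X ω) (X' ω) * dcf μ Y (Y ω) (Y' ω) ∂μ

open Classical in
/-- The population (squared) distance correlation
`R²(X,Y) = V²(X,Y)/√(V²(X,X)V²(Y,Y))` when `V²(X,X)V²(Y,Y) > 0`, else `0`. -/
noncomputable def RsqPop {Ω : Type*} [MeasurableSpace Ω] (μ : Measure Ω) {d e : ℕ}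
    (X X' : Ω → EuclideanSpace ℝ (Fin d))
    (Y Y' : Ω → EuclideanSpace ℝ (Fin e)) : ℝ :=
  if 0 < Vsq μ X X' X X' * Vsq μ Y Y' Y Y' then
    Vsq μ X X' Y Y' / Real.sqrt (Vsq μ X X' X X' * Vsq μ Y Y' Y Y')
  else 0

open Classical in
/-- The population partial distance correlation `R*(X,Y;Z)`, defined through the
projections `A_X − αC_Z` and `B_Y − βC_Z`, with
`α = V²(X,Z)/V²(Z,Z)`, `β = V²(Y,Z)/V²(Z,Z)` (zero if `V²(Z,Z) = 0`). -/
noncomputable def pdcorPop {Ω : Type*} [MeasurableSpace Ω] (μ : Measure Ω)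
    {d e f : ℕ}
    (X X' : Ω → EuclideanSpace ℝ (Fin d))
    (Y Y' : Ω → EuclideanSpace ℝ (Fin e))
    (Z Z' : Ω → EuclideanSpace ℝ (Fin f)) : ℝ :=
  let α : ℝ := if 0 < Vsq μ Z Z' Z Z' then Vsq μ X X' Z Z' / Vsq μ Z Z' Z Z' else 0
  let β : ℝ := if 0 < Vsq μ Z Z' Z Z' then Vsq μ Y Y' Z Z' / Vsq μ Z Z' Z Z' else 0
  let nPx : ℝ := Real.sqrt
    (∫ ω, (dcf μ X (X ω) (X' ω) - α * dcf μ Z (Z ω) (Z' ω)) ^ 2 ∂μ)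
  let nPy : ℝ := Real.sqrt
    (∫ ω, (dcf μ Y (Y ω) (Y' ω) - β * dcf μ Z (Z ω) (Z' ω)) ^ 2 ∂μ)
  if nPx * nPy = 0 then 0
  else
    (∫ ω, (dcf μ X (X ω) (X' ω) - α * dcf μ Z (Z ω) (Z' ω)) *
          (dcf μ Y (Y ω) (Y' ω) - β * dcf μ Z (Z ω) (Z' ω)) ∂μ) / (nPx * nPy)

/- ### Auxiliary lemmas -/

open Filter in
lemma dcf_meas {Ω : Type*} [MeasurableSpace Ω] (μ : Measure Ω) [SFinite μ] {d : ℕ}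
    {X X' : Ω → EuclideanSpace ℝ (Fin d)} (hX : Measurable X) (hX' : Measurable X') :
    AEStronglyMeasurable (fun ω => dcf μ X (X ω) (X' ω)) μ := by
  unfold dcf
  have hF : StronglyMeasurable (fun x : EuclideanSpace ℝ (Fin d) => ∫ ω, ‖x - X ω‖ ∂μ) :=
    StronglyMeasurable.integral_prod_right'
      (f := fun p : (EuclideanSpace ℝ (Fin d)) × Ω => ‖p.1 - X p.2‖)
      ((measurable_fst.sub (hX.comp measurable_snd)).norm.stronglyMeasurable)
  have hG : StronglyMeasurable (fun x' : EuclideanSpace ℝ (Fin d) => ∫ ω, ‖X ω - x'‖ ∂μ) :=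
    StronglyMeasurable.integral_prod_right'
      (f := fun p : (EuclideanSpace ℝ (Fin d)) × Ω => ‖X p.2 - p.1‖)
      (((hX.comp measurable_snd).sub measurable_fst).norm.stronglyMeasurable)
  exact ((((hX.sub hX').norm.sub (hF.measurable.comp hX)).sub
      (hG.measurable.comp hX')).add measurable_const).aestronglyMeasurable

open Filter in
lemma cs_integral {Ω : Type*} [MeasurableSpace Ω] {μ : Measure Ω} {A B : Ω → ℝ}
    (hA : MemLp A 2 μ) (hB : MemLp B 2 μ) :
    (∫ ω, A ω * B ω ∂μ)^2 ≤ (∫ ω, A ω * A ω ∂μ) * (∫ ω, B ω * B ω ∂μ) := by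
  have h2 : Real.HolderConjugate 2 2 := Real.holderConjugate_iff.mpr ⟨one_lt_two, by norm_num⟩
  have hA' : MemLp A (ENNReal.ofReal 2) μ := by convert hA using 2; norm_num
  have hB' : MemLp B (ENNReal.ofReal 2) μ := by convert hB using 2; norm_num
  have h := integral_mul_norm_le_Lp_mul_Lq h2 hA' hB'
  have e2 : ∀ f : Ω → ℝ, (∫ ω, ‖f ω‖ ^ (2:ℝ) ∂μ) = ∫ ω, f ω * f ω ∂μ := by
    intro f
    refine integral_congr_ae (Eventually.of_forall fun ω => ?_)
    show ‖f ω‖ ^ (2:ℝ) = f ω * f ω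
    rw [show ((2:ℝ) = ((2:ℕ):ℝ)) by norm_num, Real.rpow_natCast, Real.norm_eq_abs,
      sq_abs, sq]
  rw [e2 A, e2 B, ← Real.sqrt_eq_rpow, ← Real.sqrt_eq_rpow] at h
  have habs : |∫ ω, A ω * B ω ∂μ| ≤ ∫ ω, ‖A ω‖ * ‖B ω‖ ∂μ := by
    calc |∫ ω, A ω * B ω ∂μ| ≤ ∫ ω, ‖A ω * B ω‖ ∂μ :=
        (Real.norm_eq_abs _) ▸ norm_integral_le_integral_norm _
      _ = ∫ ω, ‖A ω‖ * ‖B ω‖ ∂μ := by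
          refine integral_congr_ae (Eventually.of_forall fun ω => ?_)
          show ‖A ω * B ω‖ = ‖A ω‖ * ‖B ω‖
          exact norm_mul _ _
  have hAA0 : 0 ≤ ∫ ω, A ω * A ω ∂μ := integral_nonneg fun ω => mul_self_nonneg _
  have hBB0 : 0 ≤ ∫ ω, B ω * B ω ∂μ := integral_nonneg fun ω => mul_self_nonneg _
  nlinarith [habs.trans h, abs_nonneg (∫ ω, A ω * B ω ∂μ), sq_abs (∫ ω, A ω * B ω ∂μ),
    Real.sq_sqrt hAA0, Real.sq_sqrt hBB0, Real.sqrt_nonneg (∫ ω, A ω * A ω ∂μ),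
    Real.sqrt_nonneg (∫ ω, B ω * B ω ∂μ)]

lemma expand_integral {Ω : Type*} [MeasurableSpace Ω] {μ : Measure Ω} {A B C : Ω → ℝ}
    (hAB : Integrable (fun ω => A ω * B ω) μ) (hAC : Integrable (fun ω => A ω * C ω) μ)
    (hBC : Integrable (fun ω => B ω * C ω) μ) (hCC : Integrable (fun ω => C ω * C ω) μ)
    (s t : ℝ) :
    ∫ ω, (A ω - s * C ω) * (B ω - t * C ω) ∂μ =
      (∫ ω, A ω * B ω ∂μ) - t * (∫ ω, A ω * C ω ∂μ) - s * (∫ ω, B ω * C ω ∂μ)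
        + s * t * ∫ ω, C ω * C ω ∂μ := by
  have h : ∀ ω, (A ω - s * C ω) * (B ω - t * C ω)
      = A ω * B ω - t * (A ω * C ω) - s * (B ω * C ω) + s * t * (C ω * C ω) :=
    fun ω => by ring
  simp_rw [h]
  have i1 : Integrable (fun ω => A ω * B ω - t * (A ω * C ω)) μ := hAB.sub (hAC.const_mul t)
  have i2 : Integrable (fun ω => A ω * B ω - t * (A ω * C ω) - s * (B ω * C ω)) μ :=
    i1.sub (hBC.const_mul s)
  rw [integral_add i2 (hCC.const_mul (s*t)), integral_sub i1 (hBC.const_mul s),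
    integral_sub hAB (hAC.const_mul t),
    integral_const_mul, integral_const_mul, integral_const_mul]

open Classical in
lemma core_pos (a b c p q r : ℝ) (ha0 : 0 ≤ a) (hb0 : 0 ≤ b) (hc : 0 < c)
    (hac : q^2 ≤ a*c) (hbc : r^2 ≤ b*c) :
    ((if 0 < a*c then q/Real.sqrt (a*c) else 0) ≠ 1 →
     (if 0 < b*c then r/Real.sqrt (b*c) else 0) ≠ 1 →
      (if Real.sqrt ((a*c-q^2)/c) * Real.sqrt ((b*c-r^2)/c) = 0 then 0
        else ((p*c-q*r)/c) / (Real.sqrt ((a*c-q^2)/c) * Real.sqrt ((b*c-r^2)/c)))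
      = ((if 0 < a*b then p/Real.sqrt (a*b) else 0) -
          (if 0 < a*c then q/Real.sqrt (a*c) else 0) *
          (if 0 < b*c then r/Real.sqrt (b*c) else 0)) /
        (Real.sqrt (1 - (if 0 < a*c then q/Real.sqrt (a*c) else 0)^2) *
         Real.sqrt (1 - (if 0 < b*c then r/Real.sqrt (b*c) else 0)^2))) ∧
    (((if 0 < a*c then q/Real.sqrt (a*c) else 0) = 1 ∨
      (if 0 < b*c then r/Real.sqrt (b*c) else 0) = 1) →
      (if Real.sqrt ((a*c-q^2)/c) * Real.sqrt ((b*c-r^2)/c) = 0 then 0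
        else ((p*c-q*r)/c) / (Real.sqrt ((a*c-q^2)/c) * Real.sqrt ((b*c-r^2)/c))) = 0) := by
  by_cases haz : a = 0
  · have hq2 : q^2 = 0 := le_antisymm (by nlinarith) (sq_nonneg q)
    have hq : q = 0 := pow_eq_zero_iff two_ne_zero |>.1 hq2
    simp [haz, hq]
  by_cases hbz : b = 0
  · have hr2 : r^2 = 0 := le_antisymm (by nlinarith) (sq_nonneg r)
    have hr : r = 0 := pow_eq_zero_iff two_ne_zero |>.1 hr2
    simp [hbz, hr]
  have ha : 0 < a := lt_of_le_of_ne ha0 (Ne.symm haz)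
  have hb : 0 < b := lt_of_le_of_ne hb0 (Ne.symm hbz)
  have hacp : 0 < a*c := mul_pos ha hc
  have hbcp : 0 < b*c := mul_pos hb hc
  have habp : 0 < a*b := mul_pos ha hb
  have hsac : (0:ℝ) < Real.sqrt (a*c) := Real.sqrt_pos.2 hacp
  have hsbc : (0:ℝ) < Real.sqrt (b*c) := Real.sqrt_pos.2 hbcp
  simp only [if_pos hacp, if_pos hbcp, if_pos habp]
  have hDx0 : 0 ≤ a*c - q^2 := by linarith
  have hDy0 : 0 ≤ b*c - r^2 := by linarith
  constructor
  · intro h1 h2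
    by_cases hDx : a*c - q^2 = 0
    · have hq2 : (q/Real.sqrt (a*c))^2 = 1 := by
        rw [div_pow, Real.sq_sqrt hacp.le, show q^2 = a*c by linarith]
        exact div_self (ne_of_gt hacp)
      rw [hDx, hq2]
      simp
    by_cases hDy : b*c - r^2 = 0
    · have hr2 : (r/Real.sqrt (b*c))^2 = 1 := by
        rw [div_pow, Real.sq_sqrt hbcp.le, show r^2 = b*c by linarith]
        exact div_self (ne_of_gt hbcp)
      rw [hDy, hr2]
      simp
    have hDxp : 0 < a*c - q^2 := lt_of_le_of_ne hDx0 (Ne.symm hDx)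
    have hDyp : 0 < b*c - r^2 := lt_of_le_of_ne hDy0 (Ne.symm hDy)
    have e1 : 1 - (q/(Real.sqrt a * Real.sqrt c))^2 = (a*c - q^2)/(a*c) := by
      rw [div_pow, mul_pow, Real.sq_sqrt ha0, Real.sq_sqrt hc.le]
      field_simp
    have e2 : 1 - (r/(Real.sqrt b * Real.sqrt c))^2 = (b*c - r^2)/(b*c) := by
      rw [div_pow, mul_pow, Real.sq_sqrt hb0, Real.sq_sqrt hc.le]
      field_simp
    rw [Real.sqrt_div hDx0 c, Real.sqrt_div hDy0 c,
        Real.sqrt_mul ha0 c, Real.sqrt_mul ha0 b, Real.sqrt_mul hb0 c,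
        e1, e2, Real.sqrt_div hDx0 (a*c), Real.sqrt_div hDy0 (b*c),
        Real.sqrt_mul ha0 c, Real.sqrt_mul hb0 c]
    set sx := Real.sqrt (a*c-q^2) with hsx_def
    set sy := Real.sqrt (b*c-r^2) with hsy_def
    set sa := Real.sqrt a with hsa_def
    set sb := Real.sqrt b with hsb_def
    set sc := Real.sqrt c with hsc_def
    have hsa : (0:ℝ) < sa := by rw [hsa_def]; exact Real.sqrt_pos.2 ha
    have hsb : (0:ℝ) < sb := by rw [hsb_def]; exact Real.sqrt_pos.2 hb
    have hsc : (0:ℝ) < sc := by rw [hsc_def]; exact Real.sqrt_pos.2 hc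
    have hsx : (0:ℝ) < sx := by rw [hsx_def]; exact Real.sqrt_pos.2 hDxp
    have hsy : (0:ℝ) < sy := by rw [hsy_def]; exact Real.sqrt_pos.2 hDyp
    have hne : sx/sc * (sy/sc) ≠ 0 :=
      ne_of_gt (mul_pos (div_pos hsx hsc) (div_pos hsy hsc))
    rw [if_neg hne, show c = sc^2 by rw [hsc_def]; exact (Real.sq_sqrt hc.le).symm]
    field_simp
  · rintro (h|h)
    · have hq : q = Real.sqrt (a*c) := (div_eq_one_iff_eq (ne_of_gt hsac)).1 h
      rw [show a*c - q^2 = 0 by rw [hq, Real.sq_sqrt hacp.le]; ring]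
      simp
    · have hr : r = Real.sqrt (b*c) := (div_eq_one_iff_eq (ne_of_gt hsbc)).1 h
      rw [show b*c - r^2 = 0 by rw [hr, Real.sq_sqrt hbcp.le]; ring]
      simp

open Classical in
lemma core_zero (a b c p q r : ℝ) (ha0 : 0 ≤ a) (hb0 : 0 ≤ b) (hc : c = 0) :
    ((if 0 < a*c then q/Real.sqrt (a*c) else 0) ≠ 1 →
     (if 0 < b*c then r/Real.sqrt (b*c) else 0) ≠ 1 →
      (if Real.sqrt a * Real.sqrt b = 0 then 0
        else p / (Real.sqrt a * Real.sqrt b))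
      = ((if 0 < a*b then p/Real.sqrt (a*b) else 0) -
          (if 0 < a*c then q/Real.sqrt (a*c) else 0) *
          (if 0 < b*c then r/Real.sqrt (b*c) else 0)) /
        (Real.sqrt (1 - (if 0 < a*c then q/Real.sqrt (a*c) else 0)^2) *
         Real.sqrt (1 - (if 0 < b*c then r/Real.sqrt (b*c) else 0)^2))) ∧
    (((if 0 < a*c then q/Real.sqrt (a*c) else 0) = 1 ∨
      (if 0 < b*c then r/Real.sqrt (b*c) else 0) = 1) →
      (if Real.sqrt a * Real.sqrt b = 0 then 0
        else p / (Real.sqrt a * Real.sqrt b)) = 0) := by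
  subst hc
  simp only [mul_zero, lt_self_iff_false, if_false]
  constructor
  · intro _ _
    norm_num
    by_cases hab : 0 < a*b
    · have ha : 0 < a := by
        rcases mul_pos_iff.1 hab with ⟨h1, h2⟩ | ⟨h1, h2⟩
        · exact h1
        · linarith
      have hb : 0 < b := by
        rcases mul_pos_iff.1 hab with ⟨h1, h2⟩ | ⟨h1, h2⟩
        · exact h2
        · linarith
      rw [if_pos hab, if_neg (by
        push_neg
        exact ⟨ne_of_gt (Real.sqrt_pos.2 ha), ne_of_gt (Real.sqrt_pos.2 hb)⟩ :
          ¬(Real.sqrt a = 0 ∨ Real.sqrt b = 0)), Real.sqrt_mul ha0 b]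
    · have hab0 : a*b = 0 := le_antisymm (not_lt.1 hab) (mul_nonneg ha0 hb0)
      rw [if_neg hab]
      have hz : Real.sqrt a = 0 ∨ Real.sqrt b = 0 := by
        rcases mul_eq_zero.1 hab0 with h | h
        · exact Or.inl (by simp [h])
        · exact Or.inr (by simp [h])
      rw [if_pos hz]
  · rintro (h|h) <;> norm_num at h

/-- Population partial distance correlation in terms of pairwise distance
correlations:
`R*(X,Y;Z) = (R²(X,Y) − R²(X,Z)R²(Y,Z)) / (√(1−R⁴(X,Z)) √(1−R⁴(Y,Z)))`
when `R²(X,Z) ≠ 1` and `R²(Y,Z) ≠ 1`, and `R*(X,Y;Z) = 0` otherwise. -/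
theorem pdcorPop_formula
    {Ω : Type*} [MeasurableSpace Ω] (μ : Measure Ω) [IsProbabilityMeasure μ]
    {d e f : ℕ}
    (X X' : Ω → EuclideanSpace ℝ (Fin d))
    (Y Y' : Ω → EuclideanSpace ℝ (Fin e))
    (Z Z' : Ω → EuclideanSpace ℝ (Fin f))
    (hXm : Measurable X) (hYm : Measurable Y) (hZm : Measurable Z)
    (hX'm : Measurable X') (hY'm : Measurable Y') (hZ'm : Measurable Z')
    (hX1 : Integrable (fun ω => ‖X ω‖) μ)
    (hY1 : Integrable (fun ω => ‖Y ω‖) μ)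
    (hZ1 : Integrable (fun ω => ‖Z ω‖) μ)
    (hid : IdentDistrib (fun ω => (X ω, Y ω, Z ω)) (fun ω => (X' ω, Y' ω, Z' ω)) μ μ)
    (hindep : IndepFun (fun ω => (X ω, Y ω, Z ω)) (fun ω => (X' ω, Y' ω, Z' ω)) μ)
    (hAX2 : Integrable (fun ω => (dcf μ X (X ω) (X' ω)) ^ 2) μ)
    (hBY2 : Integrable (fun ω => (dcf μ Y (Y ω) (Y' ω)) ^ 2) μ)
    (hCZ2 : Integrable (fun ω => (dcf μ Z (Z ω) (Z' ω)) ^ 2) μ) :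
    (RsqPop μ X X' Z Z' ≠ 1 → RsqPop μ Y Y' Z Z' ≠ 1 →
      pdcorPop μ X X' Y Y' Z Z' =
        (RsqPop μ X X' Y Y' - RsqPop μ X X' Z Z' * RsqPop μ Y Y' Z Z') /
        (Real.sqrt (1 - (RsqPop μ X X' Z Z') ^ 2) *
         Real.sqrt (1 - (RsqPop μ Y Y' Z Z') ^ 2))) ∧
    (RsqPop μ X X' Z Z' = 1 ∨ RsqPop μ Y Y' Z Z' = 1 →
      pdcorPop μ X X' Y Y' Z Z' = 0) := by
  classical
  have hAm : AEStronglyMeasurable (fun ω => dcf μ X (X ω) (X' ω)) μ := dcf_meas μ hXm hX'm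
  have hBm : AEStronglyMeasurable (fun ω => dcf μ Y (Y ω) (Y' ω)) μ := dcf_meas μ hYm hY'm
  have hCm : AEStronglyMeasurable (fun ω => dcf μ Z (Z ω) (Z' ω)) μ := dcf_meas μ hZm hZ'm
  have hAL2 : MemLp (fun ω => dcf μ X (X ω) (X' ω)) 2 μ :=
    (memLp_two_iff_integrable_sq hAm).2 hAX2
  have hBL2 : MemLp (fun ω => dcf μ Y (Y ω) (Y' ω)) 2 μ :=
    (memLp_two_iff_integrable_sq hBm).2 hBY2
  have hCL2 : MemLp (fun ω => dcf μ Z (Z ω) (Z' ω)) 2 μ :=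
    (memLp_two_iff_integrable_sq hCm).2 hCZ2
  have prodInt : ∀ {g h : Ω → ℝ}, AEStronglyMeasurable g μ → AEStronglyMeasurable h μ →
      Integrable (fun ω => g ω ^ 2) μ → Integrable (fun ω => h ω ^ 2) μ →
      Integrable (fun ω => g ω * h ω) μ := by
    intro g h hg hh hg2 hh2
    refine (hg2.add hh2).mono' (hg.mul hh) (Filter.Eventually.of_forall fun ω => ?_)
    have h1 := sq_nonneg (|g ω| - |h ω|)
    have h2 := sq_abs (g ω)
    have h3 := sq_abs (h ω)
    rw [Real.norm_eq_abs, abs_mul]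
    show |g ω| * |h ω| ≤ g ω ^ 2 + h ω ^ 2
    nlinarith [abs_nonneg (g ω), abs_nonneg (h ω), mul_nonneg (abs_nonneg (g ω)) (abs_nonneg (h ω))]
  have iAA := prodInt hAm hAm hAX2 hAX2
  have iBB := prodInt hBm hBm hBY2 hBY2
  have iCC := prodInt hCm hCm hCZ2 hCZ2
  have iAB := prodInt hAm hBm hAX2 hBY2
  have iAC := prodInt hAm hCm hAX2 hCZ2
  have iBC := prodInt hBm hCm hBY2 hCZ2
  have ha0 : (0:ℝ) ≤ Vsq μ X X' X X' := integral_nonneg fun ω => mul_self_nonneg _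
  have hb0 : (0:ℝ) ≤ Vsq μ Y Y' Y Y' := integral_nonneg fun ω => mul_self_nonneg _
  have hc0 : (0:ℝ) ≤ Vsq μ Z Z' Z Z' := integral_nonneg fun ω => mul_self_nonneg _
  have csXZ : (Vsq μ X X' Z Z')^2 ≤ Vsq μ X X' X X' * Vsq μ Z Z' Z Z' :=
    cs_integral hAL2 hCL2
  have csYZ : (Vsq μ Y Y' Z Z')^2 ≤ Vsq μ Y Y' Y Y' * Vsq μ Z Z' Z Z' :=
    cs_integral hBL2 hCL2
  simp only [pdcorPop, RsqPop]
  set a := Vsq μ X X' X X' with ha_def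
  set b := Vsq μ Y Y' Y Y' with hb_def
  set c := Vsq μ Z Z' Z Z' with hc_def
  set p := Vsq μ X X' Y Y' with hp_def
  set q := Vsq μ X X' Z Z' with hq_def
  set r := Vsq μ Y Y' Z Z' with hr_def
  have exA : ∀ s : ℝ, (∫ ω, (dcf μ X (X ω) (X' ω) - s * dcf μ Z (Z ω) (Z' ω))^2 ∂μ)
      = a - 2*s*q + s^2*c := by
    intro s
    rw [ha_def, hq_def, hc_def]
    unfold Vsq
    simp_rw [pow_two]
    rw [expand_integral iAA iAC iAC iCC s s]
    ring
  have exB : ∀ s : ℝ, (∫ ω, (dcf μ Y (Y ω) (Y' ω) - s * dcf μ Z (Z ω) (Z' ω))^2 ∂μ)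
      = b - 2*s*r + s^2*c := by
    intro s
    rw [hb_def, hr_def, hc_def]
    unfold Vsq
    simp_rw [pow_two]
    rw [expand_integral iBB iBC iBC iCC s s]
    ring
  have exS : ∀ s t : ℝ, (∫ ω, (dcf μ X (X ω) (X' ω) - s * dcf μ Z (Z ω) (Z' ω)) *
      (dcf μ Y (Y ω) (Y' ω) - t * dcf μ Z (Z ω) (Z' ω)) ∂μ) = p - t*q - s*r + s*t*c := by
    intro s t
    rw [hp_def, hq_def, hr_def, hc_def]
    unfold Vsq
    rw [expand_integral iAB iAC iBC iCC s t]
  by_cases hc : 0 < c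
  · simp only [if_pos hc]
    rw [exA (q/c), exB (r/c), exS (q/c) (r/c)]
    have hcne : c ≠ 0 := ne_of_gt hc
    have eDx : a - 2*(q/c)*q + (q/c)^2*c = (a*c - q^2)/c := by field_simp; ring
    have eDy : b - 2*(r/c)*r + (r/c)^2*c = (b*c - r^2)/c := by field_simp; ring
    have eS : p - (r/c)*q - (q/c)*r + (q/c)*(r/c)*c = (p*c - q*r)/c := by field_simp; ring
    rw [eDx, eDy, eS]
    exact core_pos a b c p q r ha0 hb0 hc csXZ csYZ
  · simp only [if_neg hc]
    rw [exA 0, exB 0, exS 0 0]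
    rw [show a - 2*(0:ℝ)*q + (0:ℝ)^2*c = a by ring,
        show b - 2*(0:ℝ)*r + (0:ℝ)^2*c = b by ring,
        show p - (0:ℝ)*q - (0:ℝ)*r + (0:ℝ)*(0:ℝ)*c = p by ring]
    exact core_zero a b c p q r ha0 hb0 (le_antisymm (not_lt.1 hc) hc0)
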